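/- The Harary graph H_{3,n} is distance magic if and only if n = 5. -/

import Mathlib

open scoped Classical
open Finset

/-- Weight of a vertex: sum of labels over its open neighborhood. -/
noncomputable def wsum {V : Type*} [Fintype V] (G : SimpleGraph V) (f : V → ℕ) (u : V) : ℕ :=
  ∑ v ∈ Finset.univ.filter (fun v => G.Adj u v), f v

/-- A graph is distance magic if some bijective labeling by 1,...,n has constant weights. -/
def IsDistanceMagic {V : Type*} [Fintype V] (G : SimpleGraph V) : Prop :=
  ∃ (f : V ≃ Fin (Fintype.card V)) (c : ℕ),
    ∀ u, wsum G (fun v => (f v : ℕ) + 1) u = c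

/-- `G` is `r`-regular. -/
def IsRegularDeg {V : Type*} [Fintype V] (G : SimpleGraph V) (r : ℕ) : Prop :=
  ∀ u : V, (Finset.univ.filter (fun v => G.Adj u v)).card = r

/-- `(a,d)`-distance antimagic: some bijective labeling by 1,...,n has weight set
`{a, a+d, ..., a+(n-1)d}`. -/
def IsDistAntimagic {V : Type*} [Fintype V] (G : SimpleGraph V) (a d : ℕ) : Prop :=
  ∃ f : V ≃ Fin (Fintype.card V),
    Finset.image (fun u => wsum G (fun v => (f v : ℕ) + 1) u) Finset.univ
      = Finset.image (fun i : Fin (Fintype.card V) => a + (i : ℕ) * d) Finset.univ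

/-- Circulant graph on `N` vertices with jumps `1,...,m` (so `H_{2m,N} = C_N^m`). -/
def circulant (N m : ℕ) : SimpleGraph (Fin N) :=
  SimpleGraph.fromRel (fun i j => ∃ k, 1 ≤ k ∧ k ≤ m ∧ ((i : ℕ) + k) % N = (j : ℕ))

/-- The graph `(K_{n-1} - M) + K_1`: vertex `0` joined to all, and vertices `1,...,n-1`
forming a complete graph minus the perfect matching pairing `i` with `i + (n-1)/2 (mod n-1)`. -/
def calG (n : ℕ) : SimpleGraph (Fin n) :=
  SimpleGraph.fromRel (fun i j =>
    (i : ℕ) = 0 ∨ (j : ℕ) = 0 ∨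
      ¬ (((i : ℕ) - 1 + (n - 1) / 2) % (n - 1) = (j : ℕ) - 1))

/-- Lexicographic product `G ∘ H`. -/
def lexProd {α β : Type*} (G : SimpleGraph α) (H : SimpleGraph β) : SimpleGraph (α × β) where
  Adj x y := G.Adj x.1 y.1 ∨ (x.1 = y.1 ∧ H.Adj x.2 y.2)
  symm := ⟨by
    rintro ⟨a, b⟩ ⟨c, d⟩ (h | ⟨h1, h2⟩)
    · exact Or.inl h.symm
    · exact Or.inr ⟨h1.symm, h2.symm⟩⟩
  loopless := ⟨by
    rintro ⟨a, b⟩ (h | ⟨-, h⟩)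
    · exact G.ne_of_adj h rfl
    · exact H.ne_of_adj h rfl⟩

/-- Direct (tensor) product `G × H`. -/
def tensorProd {α β : Type*} (G : SimpleGraph α) (H : SimpleGraph β) : SimpleGraph (α × β) where
  Adj x y := G.Adj x.1 y.1 ∧ H.Adj x.2 y.2
  symm := ⟨fun _ _ h => ⟨h.1.symm, h.2.symm⟩⟩
  loopless := ⟨fun x h => G.ne_of_adj h.1 rfl⟩

/-- The Harary graph `H_{3,n}`. -/
noncomputable def harary3 (n : ℕ) : SimpleGraph (Fin n) :=
  circulant n 1 ⊔ SimpleGraph.fromRel (fun i j =>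
    if n % 2 = 0 then
      ∃ k, 1 ≤ k ∧ k ≤ n / 2 ∧ (i : ℕ) = k ∧ (j : ℕ) = (k + n / 2) % n
    else
      ((i : ℕ) = 0 ∧ ((j : ℕ) = (n - 1) / 2 ∨ (j : ℕ) = (n + 1) / 2)) ∨
      (∃ k, 1 ≤ k ∧ k < (n - 1) / 2 ∧ (i : ℕ) = k ∧ (j : ℕ) = (k + (n + 1) / 2) % n))

/-- The Harary graph `H_{2n+1,2n+3}`: `C_{2n+3}^n` together with edges `v_0 v_{n+1}`,
`v_0 v_{n+2}` and `v_i v_{i+n+2}` for `1 ≤ i < n+1`. -/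
def hararyOdd (n : ℕ) : SimpleGraph (Fin (2 * n + 3)) :=
  circulant (2 * n + 3) n ⊔ SimpleGraph.fromRel (fun i j =>
    ((i : ℕ) = 0 ∧ ((j : ℕ) = n + 1 ∨ (j : ℕ) = n + 2)) ∨
    (∃ k, 1 ≤ k ∧ k < n + 1 ∧ (i : ℕ) = k ∧ (j : ℕ) = k + n + 2))

/-- The Harary graph `H_{4n+1,4n+4}`: circulant with jumps `1,...,2n` and `2n+2`. -/
def harary41 (n : ℕ) : SimpleGraph (Fin (4 * n + 4)) :=
  SimpleGraph.fromRel (fun i j =>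
    ∃ k, ((1 ≤ k ∧ k ≤ 2 * n) ∨ k = 2 * n + 2) ∧ ((i : ℕ) + k) % (4 * n + 4) = (j : ℕ))

/-- The join `G + K_1`. -/
def joinK1 {V : Type*} (G : SimpleGraph V) : SimpleGraph (V ⊕ Unit) :=
  SimpleGraph.fromRel (fun x y =>
    match x, y with
    | Sum.inl a, Sum.inl b => G.Adj a b
    | Sum.inl _, Sum.inr _ => True
    | Sum.inr _, _ => False)

lemma ex_one {P : ℕ → Prop} : (∃ k, 1 ≤ k ∧ k ≤ 1 ∧ P k) ↔ P 1 := by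
  constructor
  · rintro ⟨k, h1, h2, h⟩
    have : k = 1 := le_antisymm h2 h1
    rwa [this] at h
  · intro h; exact ⟨1, le_refl _, le_refl _, h⟩

lemma mod_cases {a n : ℕ} (h : a < 2*n) : a % n = a ∧ a < n ∨ a % n = a - n ∧ n ≤ a := by
  rcases lt_or_ge a n with h1 | h1
  · exact Or.inl ⟨Nat.mod_eq_of_lt h1, h1⟩
  · refine Or.inr ⟨?_, h1⟩
    rw [Nat.mod_eq_sub_mod h1, Nat.mod_eq_of_lt (by omega)]

lemma even_adj (n : ℕ) (hn : 4 ≤ n) (he : n % 2 = 0) (i j : Fin n) :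
    (harary3 n).Adj i j ↔
      ((j:ℕ) = ((i:ℕ)+1) % n ∨ (j:ℕ) = ((i:ℕ)+(n-1)) % n ∨ (j:ℕ) = ((i:ℕ)+n/2) % n) := by
  have hi := i.isLt
  have hj := j.isLt
  simp only [harary3, SimpleGraph.sup_adj, circulant, SimpleGraph.fromRel_adj, he, if_pos, ex_one]
  constructor
  · rintro (⟨hne, hc | hc⟩ | ⟨hne, ⟨k,hk1,hk2,hk3,hk4⟩ | ⟨k,hk1,hk2,hk3,hk4⟩⟩)
    · exact Or.inl hc.symm
    · right; left
      rcases mod_cases (show (j:ℕ)+1 < 2*n by omega) with ⟨e1,f1⟩|⟨e1,f1⟩ <;>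
      rcases mod_cases (show (i:ℕ)+(n-1) < 2*n by omega) with ⟨e2,f2⟩|⟨e2,f2⟩ <;>
        rw [e2] <;> omega
    · right; right; rw [hk3]; exact hk4
    · right; right
      rcases mod_cases (show k+n/2 < 2*n by omega) with ⟨e1,f1⟩|⟨e1,f1⟩ <;>
      rcases mod_cases (show (i:ℕ)+n/2 < 2*n by omega) with ⟨e2,f2⟩|⟨e2,f2⟩ <;>
        rw [e2] <;> omega
  · rintro (h|h|h)
    · refine Or.inl ⟨?_, Or.inl h.symm⟩
      intro heq
      have hv : (i:ℕ) = j := congrArg Fin.val heq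
      rcases mod_cases (show (i:ℕ)+1 < 2*n by omega) with ⟨e1,f1⟩|⟨e1,f1⟩ <;> omega
    · have hij : (j:ℕ) = (i:ℕ) + (n-1) ∨ (j:ℕ) + n = (i:ℕ) + (n-1) := by
        rcases mod_cases (show (i:ℕ)+(n-1) < 2*n by omega) with ⟨e1,f1⟩|⟨e1,f1⟩ <;> omega
      refine Or.inl ⟨?_, Or.inr ?_⟩
      · intro heq
        have hv : (i:ℕ) = j := congrArg Fin.val heq
        omega
      · rcases mod_cases (show (j:ℕ)+1 < 2*n by omega) with ⟨e2,f2⟩|⟨e2,f2⟩ <;> omega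
    · have hij : (j:ℕ) = (i:ℕ) + n/2 ∨ (j:ℕ) + n = (i:ℕ) + n/2 := by
        rcases mod_cases (show (i:ℕ)+n/2 < 2*n by omega) with ⟨e1,f1⟩|⟨e1,f1⟩ <;> omega
      refine Or.inr ⟨?_, ?_⟩
      · intro heq
        have hv : (i:ℕ) = j := congrArg Fin.val heq
        omega
      · by_cases hcase : 1 ≤ (i:ℕ) ∧ (i:ℕ) ≤ n/2
        · exact Or.inl ⟨(i:ℕ), hcase.1, hcase.2, rfl, h⟩
        · refine Or.inr ⟨(j:ℕ), by omega, by omega, rfl, ?_⟩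
          have hgoal : ((j:ℕ)+n/2) % n = (i:ℕ) := by
            rcases mod_cases (show (j:ℕ)+n/2 < 2*n by omega) with ⟨e2,f2⟩|⟨e2,f2⟩ <;> omega
          exact hgoal.symm

lemma even_filter (n : ℕ) (hn : 4 ≤ n) (he : n % 2 = 0) (i : Fin n) :
    Finset.univ.filter (fun v => (harary3 n).Adj i v) =
      {i + ⟨1, by omega⟩, i + ⟨n-1, by omega⟩, i + ⟨n/2, by omega⟩} := by
  ext v
  simp only [mem_filter, mem_univ, true_and, mem_insert, mem_singleton,
    even_adj n hn he, Fin.ext_iff, Fin.val_add]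

lemma even_wsum (n : ℕ) (hn : 4 ≤ n) (he : n % 2 = 0) (g : Fin n → ℕ) (i : Fin n) :
    wsum (harary3 n) g i =
      g (i + ⟨1, by omega⟩) + (g (i + ⟨n-1, by omega⟩) + g (i + ⟨n/2, by omega⟩)) := by
  haveI : NeZero n := ⟨by omega⟩
  have hd1 : i + (⟨1, by omega⟩ : Fin n) ≠ i + ⟨n-1, by omega⟩ := by
    intro h
    have := add_left_cancel h
    rw [Fin.mk.injEq] at this
    omega
  have hd2 : i + (⟨1, by omega⟩ : Fin n) ≠ i + ⟨n/2, by omega⟩ := by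
    intro h
    have := add_left_cancel h
    rw [Fin.mk.injEq] at this
    omega
  have hd3 : i + (⟨n-1, by omega⟩ : Fin n) ≠ i + ⟨n/2, by omega⟩ := by
    intro h
    have := add_left_cancel h
    rw [Fin.mk.injEq] at this
    omega
  rw [wsum, even_filter n hn he]
  rw [Finset.sum_insert (by simp [hd1, hd2]), Finset.sum_insert (by simp [hd3]),
    Finset.sum_singleton]

lemma even_not (n : ℕ) (hn : 4 ≤ n) (he : n % 2 = 0) : ¬ ∃ (f : Fin n ≃ Fin (Fintype.card (Fin n))) (c : ℕ),
    ∀ u, wsum (harary3 n) (fun v => (f v : ℕ) + 1) u = c := by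
  haveI : NeZero n := ⟨by omega⟩
  rintro ⟨f, c, hw⟩
  obtain ⟨g, hg⟩ : ∃ g : Fin n → ℕ, (fun v => ((f v : ℕ) + 1)) = g := ⟨_, rfl⟩
  rw [hg] at hw
  have hS : 2 * ∑ v, g v = n * (n+1) := by
    have h1 : ∑ v, g v = ∑ i : Fin (Fintype.card (Fin n)), ((i:ℕ)+1) := by
      rw [← hg]; exact Equiv.sum_comp f (fun i => (i:ℕ)+1)
    rw [h1, Fintype.card_fin]
    have h2 : ∑ i : Fin n, ((i:ℕ)+1) = ∑ i ∈ Finset.range n, (i+1) :=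
      Fin.sum_univ_eq_sum_range (fun m => m+1) n
    rw [h2]
    have h3 : ∑ i ∈ Finset.range (n+1), i = (∑ i ∈ Finset.range n, (i+1)) + 0 :=
      Finset.sum_range_succ' (fun i => i) n
    have h4 := Finset.sum_range_id_mul_two (n+1)
    have h5 : (n+1) * (n+1-1) = n * (n+1) := by rw [Nat.add_sub_cancel, mul_comm]
    rw [h5] at h4
    omega
  have hT : n * c = 3 * ∑ v, g v := by
    have h2 : ∑ u, wsum (harary3 n) g u = ∑ _u : Fin n, c := by
      exact Finset.sum_congr rfl (fun u _ => hw u)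
    rw [Finset.sum_const, Finset.card_univ, Fintype.card_fin, smul_eq_mul] at h2
    have h3 : ∑ u : Fin n, wsum (harary3 n) g u = 3 * ∑ v, g v := by
      have h4 : ∀ a : Fin n, ∑ u : Fin n, g (u + a) = ∑ v, g v := fun a =>
        Equiv.sum_comp (Equiv.addRight a) g
      calc ∑ u : Fin n, wsum (harary3 n) g u
          = ∑ u : Fin n, (g (u + ⟨1, by omega⟩) + (g (u + ⟨n-1, by omega⟩) + g (u + ⟨n/2, by omega⟩))) :=
            Finset.sum_congr rfl (fun u _ => even_wsum n hn he g u)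
        _ = (∑ u : Fin n, g (u + ⟨1, by omega⟩)) + ((∑ u : Fin n, g (u + ⟨n-1, by omega⟩)) + (∑ u : Fin n, g (u + ⟨n/2, by omega⟩))) := by
            rw [Finset.sum_add_distrib, Finset.sum_add_distrib]
        _ = 3 * ∑ v, g v := by rw [h4, h4, h4]; ring
    rw [← h3, h2]
  have h5 : n * (2 * c) = n * (3 * (n+1)) := by
    calc n * (2 * c) = 2 * (n * c) := by ring
      _ = 2 * (3 * ∑ v, g v) := by rw [hT]
      _ = 3 * (2 * ∑ v, g v) := by ring
      _ = 3 * (n * (n+1)) := by rw [hS]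
      _ = n * (3 * (n+1)) := by ring
  have h6 : 2 * c = 3 * (n+1) := Nat.eq_of_mul_eq_mul_left (by omega) h5
  omega

lemma odd_filter1 (n : ℕ) (hn : 7 ≤ n) (ho : n % 2 = 1) :
    Finset.univ.filter (fun w => (harary3 n).Adj ⟨(n+1)/2 - 1, by omega⟩ w) =
      ({⟨(n+1)/2 - 2, by omega⟩, ⟨(n+1)/2, by omega⟩, ⟨0, by omega⟩} : Finset (Fin n)) := by
  ext v
  have hv := v.isLt
  simp only [mem_filter, mem_univ, true_and, mem_insert, mem_singleton, harary3,
    SimpleGraph.sup_adj, circulant, SimpleGraph.fromRel_adj, ex_one,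
    if_neg (show ¬ n % 2 = 0 by omega), ne_eq, Fin.ext_iff]
  constructor
  · rintro (⟨hne, h | h⟩ | ⟨hne, (⟨h0, -⟩ | ⟨k,hk1,hk2,hk3,-⟩) | (⟨hv0, -⟩ | ⟨k,hk1,hk2,hk3,hk4⟩)⟩)
    · rw [Nat.mod_eq_of_lt (by omega)] at h; omega
    · rcases mod_cases (show (v:ℕ)+1 < 2*n by omega) with ⟨e,f⟩|⟨e,f⟩ <;> omega
    · omega
    · omega
    · omega
    · rw [Nat.mod_eq_of_lt (by omega)] at hk4; omega
  · rintro (h|h|h)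
    · exact Or.inl ⟨by omega, Or.inr (by rw [h, Nat.mod_eq_of_lt (by omega)]; omega)⟩
    · exact Or.inl ⟨by omega, Or.inl (by rw [Nat.mod_eq_of_lt (by omega)]; omega)⟩
    · exact Or.inr ⟨by omega, Or.inr (Or.inl ⟨h, Or.inl (by omega)⟩)⟩

lemma odd_filter2 (n : ℕ) (hn : 7 ≤ n) (ho : n % 2 = 1) :
    Finset.univ.filter (fun w => (harary3 n).Adj ⟨n - 1, by omega⟩ w) =
      ({⟨n - 2, by omega⟩, ⟨0, by omega⟩, ⟨(n+1)/2 - 2, by omega⟩} : Finset (Fin n)) := by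
  ext v
  have hv := v.isLt
  simp only [mem_filter, mem_univ, true_and, mem_insert, mem_singleton, harary3,
    SimpleGraph.sup_adj, circulant, SimpleGraph.fromRel_adj, ex_one,
    if_neg (show ¬ n % 2 = 0 by omega), ne_eq, Fin.ext_iff]
  constructor
  · rintro (⟨hne, h | h⟩ | ⟨hne, (⟨h0, -⟩ | ⟨k,hk1,hk2,hk3,-⟩) | (⟨hv0, hx⟩ | ⟨k,hk1,hk2,hk3,hk4⟩)⟩)
    · have e : n - 1 + 1 = n := by omega
      rw [e, Nat.mod_self] at h; omega
    · rcases mod_cases (show (v:ℕ)+1 < 2*n by omega) with ⟨e,f⟩|⟨e,f⟩ <;> omega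
    · omega
    · omega
    · omega
    · rw [Nat.mod_eq_of_lt (by omega)] at hk4; omega
  · rintro (h|h|h)
    · exact Or.inl ⟨by omega, Or.inr (by rw [h, Nat.mod_eq_of_lt (by omega)]; omega)⟩
    · refine Or.inl ⟨by omega, Or.inl ?_⟩
      have e : n - 1 + 1 = n := by omega
      rw [e, Nat.mod_self]; omega
    · refine Or.inr ⟨by omega, Or.inr (Or.inr ⟨(n+1)/2 - 2, by omega, by omega, h, ?_⟩)⟩
      rw [Nat.mod_eq_of_lt (by omega)]; omega

lemma odd_not (n : ℕ) (hn : 7 ≤ n) (ho : n % 2 = 1) :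
    ¬ ∃ (f : Fin n ≃ Fin (Fintype.card (Fin n))) (c : ℕ),
      ∀ u, wsum (harary3 n) (fun v => (f v : ℕ) + 1) u = c := by
  rintro ⟨f, c, hw⟩
  set g : Fin n → ℕ := fun v => (f v : ℕ) + 1 with hg
  have h1 := hw ⟨(n+1)/2 - 1, by omega⟩
  have h2 := hw ⟨n - 1, by omega⟩
  rw [wsum, odd_filter1 n hn ho] at h1
  rw [wsum, odd_filter2 n hn ho] at h2
  rw [Finset.sum_insert (by simp [Fin.ext_iff]; omega),
    Finset.sum_insert (by simp [Fin.ext_iff]; omega), Finset.sum_singleton] at h1 h2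
  have key : g ⟨(n+1)/2, by omega⟩ = g ⟨n - 2, by omega⟩ := by omega
  have : f ⟨(n+1)/2, by omega⟩ = f ⟨n - 2, by omega⟩ := by
    have := congrArg (fun x => x) key
    simp only [hg] at key
    exact Fin.ext (by omega)
  have := f.injective this
  rw [Fin.mk.injEq] at this
  omega

lemma ex_one' {P : ℕ → Prop} : (∃ k, 1 ≤ k ∧ k < 2 ∧ P k) ↔ P 1 := by
  constructor
  · rintro ⟨k, h1, h2, h⟩
    have : k = 1 := by omega
    rwa [this] at h
  · intro h; exact ⟨1, le_refl _, by omega, h⟩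

lemma filter5 (u : Fin 5) : Finset.univ.filter (fun v => (harary3 5).Adj u v) =
    (![{1,2,3,4},{0,2,4},{0,1,3},{0,2,4},{0,1,3}] : Fin 5 → Finset (Fin 5)) u := by
  ext v
  simp only [mem_filter, mem_univ, true_and, harary3, SimpleGraph.sup_adj, circulant,
    SimpleGraph.fromRel_adj, ex_one, ex_one']
  fin_cases u <;> fin_cases v <;> simp

def p5 : Fin 5 ≃ Fin 5 :=
  ⟨![4,0,1,3,2], ![1,2,4,3,0], by decide, by decide⟩

lemma five_magic : ∃ (f : Fin 5 ≃ Fin (Fintype.card (Fin 5))) (c : ℕ),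
    ∀ u, wsum (harary3 5) (fun v => (f v : ℕ) + 1) u = c := by
  refine ⟨p5.trans (finCongr (Fintype.card_fin 5).symm), 10, ?_⟩
  intro u
  rw [wsum, filter5 u]
  fin_cases u <;> decide

/-- H_{3,n} is distance magic iff n = 5. -/
theorem harary3_distance_magic_iff (n : ℕ) (hn : 4 ≤ n) :
    IsDistanceMagic (harary3 n) ↔ n = 5 := by
  constructor
  · intro h
    by_contra hne5
    rcases Nat.mod_two_eq_zero_or_one n with he | ho
    · exact even_not n hn he h
    · exact odd_not n (by omega) ho h
  · rintro rfl
    exact five_magic
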